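/- For X, Y ∈ ℝ^{M×N} with K_X = X Xᵀ and K_Y = Y Yᵀ, the squared Bures distance Tr[K_X] + Tr[K_Y] − 2ℱ(K_X, K_Y) equals the squared Procrustes distance min_{QᵀQ=I} ‖X − Y Q‖_F². -/

import Mathlib

open Matrix

lemma real_conjTranspose_eq {m n : ℕ} (A : Matrix (Fin m) (Fin n) ℝ) : Aᴴ = Aᵀ := rfl

lemma psd_tmul {m n : ℕ} (A : Matrix (Fin m) (Fin n) ℝ) : (Aᵀ * A).PosSemidef := by
  have h := Matrix.posSemidef_conjTranspose_mul_self A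
  rwa [real_conjTranspose_eq] at h

lemma psd_gram {m n : ℕ} (A : Matrix (Fin m) (Fin n) ℝ) : (A * Aᵀ).PosSemidef := by
  have h := Matrix.posSemidef_self_mul_conjTranspose A
  rwa [real_conjTranspose_eq] at h

section OldSqrt
open scoped ComplexOrder

/-- The positive semidefinite square root of a positive semidefinite matrix
(the definition `Matrix.PosSemidef.sqrt` of the older Mathlib, removed since). -/
noncomputable def Matrix.PosSemidef.sqrt {n 𝕜 : Type*} [Fintype n] [DecidableEq n] [RCLike 𝕜]
    {A : Matrix n n 𝕜} (hA : A.PosSemidef) : Matrix n n 𝕜 :=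
  hA.1.eigenvectorUnitary.1 * diagonal ((↑) ∘ (√·) ∘ hA.1.eigenvalues) *
  (star hA.1.eigenvectorUnitary : Matrix n n 𝕜)

lemma Matrix.PosSemidef.posSemidef_sqrt {n 𝕜 : Type*} [Fintype n] [DecidableEq n] [RCLike 𝕜]
    {A : Matrix n n 𝕜} (hA : A.PosSemidef) : hA.sqrt.PosSemidef := by
  have hd : (diagonal ((↑) ∘ (√·) ∘ hA.1.eigenvalues : n → 𝕜)).PosSemidef := by
    rw [Matrix.posSemidef_diagonal_iff]
    intro i
    simp only [Function.comp_apply]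
    exact_mod_cast Real.sqrt_nonneg _
  exact hd.mul_mul_conjTranspose_same hA.1.eigenvectorUnitary.1

end OldSqrt

lemma psd_sand {M : ℕ} {Kx Ky : Matrix (Fin M) (Fin M) ℝ} (hx : Kx.PosSemidef) (hy : Ky.PosSemidef) :
    (hx.sqrt * Ky * hx.sqrt).PosSemidef := by
  have h := hy.mul_mul_conjTranspose_same hx.sqrt
  rwa [hx.posSemidef_sqrt.isHermitian.eq] at h

/-- Nuclear norm: sum of singular values, i.e. `Tr[(AᵀA)^{1/2}]`. -/
noncomputable def nuclearNorm {m n : ℕ} (A : Matrix (Fin m) (Fin n) ℝ) : ℝ :=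
  (Matrix.PosSemidef.sqrt (psd_tmul A)).trace

/-- Frobenius norm. -/
noncomputable def frobNorm {m n : ℕ} (A : Matrix (Fin m) (Fin n) ℝ) : ℝ :=
  Real.sqrt (Matrix.trace (Aᵀ * A))

/-- Fidelity `Tr[(Kx^{1/2} Ky Kx^{1/2})^{1/2}]` between PSD matrices. -/
noncomputable def fidelity {M : ℕ} {Kx Ky : Matrix (Fin M) (Fin M) ℝ}
    (hx : Kx.PosSemidef) (hy : Ky.PosSemidef) : ℝ :=
  (Matrix.PosSemidef.sqrt (psd_sand hx hy)).trace

section BuresHelpers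

private lemma bures_sqrt_mul_self {n : ℕ} {A : Matrix (Fin n) (Fin n) ℝ} (hA : A.PosSemidef) :
    hA.sqrt * hA.sqrt = A := by
  have hU : star (hA.1.eigenvectorUnitary : Matrix (Fin n) (Fin n) ℝ) *
      (hA.1.eigenvectorUnitary : Matrix (Fin n) (Fin n) ℝ) = 1 :=
    Matrix.mem_unitaryGroup_iff'.mp hA.1.eigenvectorUnitary.2
  conv_rhs => rw [hA.1.spectral_theorem]
  rw [Matrix.PosSemidef.sqrt]
  calc _ = (hA.1.eigenvectorUnitary : Matrix (Fin n) (Fin n) ℝ) *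
        (diagonal (RCLike.ofReal ∘ (√·) ∘ hA.1.eigenvalues : Fin n → ℝ) *
        (star (hA.1.eigenvectorUnitary : Matrix (Fin n) (Fin n) ℝ) *
          (hA.1.eigenvectorUnitary : Matrix (Fin n) (Fin n) ℝ)) *
        diagonal (RCLike.ofReal ∘ (√·) ∘ hA.1.eigenvalues : Fin n → ℝ)) *
        star (hA.1.eigenvectorUnitary : Matrix (Fin n) (Fin n) ℝ) := by
        simp only [Matrix.mul_assoc]
    _ = _ := by
      rw [hU, Matrix.mul_one, diagonal_mul_diagonal]
      congr 2
      ext i j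
      by_cases h : i = j
      · subst h; simp [Real.mul_self_sqrt (hA.eigenvalues_nonneg i)]
      · simp [h]

open Polynomial
open scoped RealInnerProductSpace

private lemma bures_pow_conj {n : ℕ} (V D : Matrix (Fin n) (Fin n) ℝ) (hV : V * Vᵀ = 1)
    (hV' : Vᵀ * V = 1) (k : ℕ) : (V * D * Vᵀ) ^ k = V * D ^ k * Vᵀ := by
  induction k with
  | zero => simp [hV]
  | succ k ih =>
    rw [pow_succ, ih, pow_succ]
    calc V * D ^ k * Vᵀ * (V * D * Vᵀ) = V * D ^ k * (Vᵀ * V) * D * Vᵀ := by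
          noncomm_ring
      _ = V * (D ^ k * D) * Vᵀ := by rw [hV']; noncomm_ring

private lemma bures_aeval_conj {n : ℕ} (V D : Matrix (Fin n) (Fin n) ℝ) (hV : V * Vᵀ = 1)
    (hV' : Vᵀ * V = 1) (p : ℝ[X]) : aeval (V * D * Vᵀ) p = V * aeval D p * Vᵀ := by
  induction p using Polynomial.induction_on' with
  | add p q hp hq => rw [map_add, hp, hq, map_add, mul_add, add_mul]
  | monomial k c =>
    rw [aeval_monomial, aeval_monomial, bures_pow_conj V D hV hV' k,
      ← Algebra.smul_def, ← Algebra.smul_def, Matrix.mul_smul, Matrix.smul_mul]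

private lemma bures_aeval_diagonal {n : ℕ} (d : Fin n → ℝ) (p : ℝ[X]) :
    aeval (Matrix.diagonal d) p = Matrix.diagonal (fun i => p.eval (d i)) := by
  induction p using Polynomial.induction_on' with
  | add p q hp hq =>
    rw [map_add, hp, hq]
    ext i j
    by_cases h : i = j <;> simp [h, Matrix.diagonal]
  | monomial k c =>
    rw [aeval_monomial, Matrix.algebraMap_eq_diagonal, diagonal_pow, diagonal_mul_diagonal]
    ext i j
    by_cases h : i = j <;> simp [h, Matrix.diagonal]

private lemma bures_pow_intertwine {m n : ℕ} (A : Matrix (Fin m) (Fin n) ℝ) (k : ℕ) :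
    A * (Aᵀ * A) ^ k = (A * Aᵀ) ^ k * A := by
  induction k with
  | zero => simp
  | succ k ih =>
    rw [pow_succ, pow_succ, ← Matrix.mul_assoc, ih, Matrix.mul_assoc, Matrix.mul_assoc,
      Matrix.mul_assoc]

private lemma bures_aeval_intertwine {m n : ℕ} (A : Matrix (Fin m) (Fin n) ℝ) (q : ℝ[X]) :
    A * aeval (Aᵀ * A) q = aeval (A * Aᵀ) q * A := by
  induction q using Polynomial.induction_on' with
  | add p q hp hq => rw [map_add, map_add, Matrix.mul_add, Matrix.add_mul, hp, hq]
  | monomial k c =>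
    rw [aeval_monomial, aeval_monomial, ← Algebra.smul_def, ← Algebra.smul_def,
      Matrix.mul_smul, Matrix.smul_mul, bures_pow_intertwine]

private lemma bures_trace_aeval_symm {m n : ℕ} (A : Matrix (Fin m) (Fin n) ℝ) (p : ℝ[X])
    (h0 : p.eval 0 = 0) :
    (aeval (Aᵀ * A) p).trace = (aeval (A * Aᵀ) p).trace := by
  have hdvd : X ∣ p := (Polynomial.X_dvd_iff).2 (by rwa [coeff_zero_eq_eval_zero])
  obtain ⟨q, rfl⟩ := hdvd
  rw [_root_.map_mul, _root_.map_mul, aeval_X, aeval_X]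
  calc (Aᵀ * A * aeval (Aᵀ * A) q).trace
      = (Aᵀ * (A * aeval (Aᵀ * A) q)).trace := by rw [Matrix.mul_assoc]
    _ = ((A * aeval (Aᵀ * A) q) * Aᵀ).trace := Matrix.trace_mul_comm _ _
    _ = (aeval (A * Aᵀ) q * A * Aᵀ).trace := by rw [bures_aeval_intertwine]
    _ = (A * Aᵀ * aeval (A * Aᵀ) q).trace := by
        rw [Matrix.mul_assoc, Matrix.trace_mul_comm]

private lemma bures_aeval_eq_sqrt {n : ℕ} {S : Matrix (Fin n) (Fin n) ℝ} (hS : S.PosSemidef)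
    (p : ℝ[X])
    (hp : ∀ i, p.eval (hS.1.eigenvalues i) = Real.sqrt (hS.1.eigenvalues i)) :
    aeval S p = hS.sqrt := by
  set V : Matrix (Fin n) (Fin n) ℝ := (hS.1.eigenvectorUnitary : Matrix (Fin n) (Fin n) ℝ)
    with hVdef
  have hV : V * Vᵀ = 1 := by
    have := (hS.1.eigenvectorUnitary).2
    rwa [Matrix.mem_unitaryGroup_iff] at this
  have hV' : Vᵀ * V = 1 := by
    have := (hS.1.eigenvectorUnitary).2
    rwa [Matrix.mem_unitaryGroup_iff'] at this
  have hspec : S = V * Matrix.diagonal hS.1.eigenvalues * Vᵀ := by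
    have := hS.1.spectral_theorem
    simpa [RCLike.ofReal_real_eq_id, hVdef, Matrix.star_eq_conjTranspose,
      Matrix.conjTranspose_eq_transpose_of_trivial] using this
  have hsqrt : hS.sqrt = V * Matrix.diagonal (Real.sqrt ∘ hS.1.eigenvalues) * Vᵀ := rfl
  rw [hsqrt]
  conv_lhs => rw [hspec]
  rw [bures_aeval_conj V _ hV hV', bures_aeval_diagonal]
  have he : (fun i => p.eval (hS.1.eigenvalues i)) = Real.sqrt ∘ hS.1.eigenvalues := funext hp
  rw [he]

private lemma bures_trace_sqrt_symm {m n : ℕ} (A : Matrix (Fin m) (Fin n) ℝ) :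
    (psd_tmul A).sqrt.trace = (psd_gram A).sqrt.trace := by
  classical
  set s : Finset ℝ := insert (0:ℝ)
    ((Finset.univ.image (psd_tmul A).1.eigenvalues) ∪
     (Finset.univ.image (psd_gram A).1.eigenvalues)) with hs
  set p : ℝ[X] := Lagrange.interpolate s id Real.sqrt with hpdef
  have hinj : Set.InjOn id (s : Set ℝ) := Function.injective_id.injOn
  have heval : ∀ x ∈ s, p.eval x = Real.sqrt x := fun x hx => by
    exact Lagrange.eval_interpolate_at_node (r := Real.sqrt) hinj hx
  have h0 : p.eval 0 = 0 := by
    rw [heval 0 (Finset.mem_insert_self _ _), Real.sqrt_zero]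
  have h1 : aeval (Aᵀ * A) p = (psd_tmul A).sqrt := by
    refine bures_aeval_eq_sqrt _ _ fun i => heval _ ?_
    exact Finset.mem_insert_of_mem (Finset.mem_union_left _
      (Finset.mem_image_of_mem _ (Finset.mem_univ i)))
  have h2 : aeval (A * Aᵀ) p = (psd_gram A).sqrt := by
    refine bures_aeval_eq_sqrt _ _ fun i => heval _ ?_
    exact Finset.mem_insert_of_mem (Finset.mem_union_right _
      (Finset.mem_image_of_mem _ (Finset.mem_univ i)))
  rw [← h1, ← h2, bures_trace_aeval_symm A p h0]

private lemma bures_sqrt_trace_congr {n : ℕ} {M₁ M₂ : Matrix (Fin n) (Fin n) ℝ} (h : M₁ = M₂)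
    (h₁ : M₁.PosSemidef) (h₂ : M₂.PosSemidef) : h₁.sqrt.trace = h₂.sqrt.trace := by
  subst h; rfl

private lemma bures_euc_inner_eq_dot {N : ℕ} (x y : EuclideanSpace ℝ (Fin N)) :
    ⟪x, y⟫ = ⇑x ⬝ᵥ ⇑y := by
  simp [PiLp.inner_apply, dotProduct, RCLike.inner_apply, mul_comm]

private lemma bures_exists_polar {N : ℕ} (B : Matrix (Fin N) (Fin N) ℝ) :
    ∃ Q : Matrix (Fin N) (Fin N) ℝ, Qᵀ * Q = 1 ∧ B = Q * (psd_tmul B).sqrt := by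
  classical
  have hS := psd_tmul B
  set h := hS.1 with hh
  set lam : Fin N → ℝ := h.eigenvalues with hlam
  have hlam0 : ∀ i, 0 ≤ lam i := fun i => hS.eigenvalues_nonneg i
  set w : Fin N → EuclideanSpace ℝ (Fin N) := fun i => h.eigenvectorBasis i with hw
  have hdot : ∀ i j, (B *ᵥ ⇑(w i)) ⬝ᵥ (B *ᵥ ⇑(w j)) = if i = j then lam j else 0 := by
    intro i j
    have h1 : ⇑(w i) ⬝ᵥ ((Bᵀ * B) *ᵥ ⇑(w j)) = (B *ᵥ ⇑(w i)) ⬝ᵥ (B *ᵥ ⇑(w j)) := by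
      rw [← Matrix.mulVec_mulVec, Matrix.dotProduct_mulVec, Matrix.vecMul_transpose]
    rw [← h1, h.mulVec_eigenvectorBasis j, dotProduct_smul]
    have h3 : ⇑(w i) ⬝ᵥ ⇑(w j) = if i = j then 1 else 0 := by
      rw [← bures_euc_inner_eq_dot]
      exact orthonormal_iff_ite.mp h.eigenvectorBasis.orthonormal i j
    rw [h3]
    by_cases hij : i = j <;> simp [hij, hlam]
  have hBw : ∀ i j, ⟪(WithLp.toLp 2 (B *ᵥ ⇑(w i))),
      (WithLp.toLp 2 (B *ᵥ ⇑(w j)))⟫ = if i = j then lam j else 0 := by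
    intro i j
    rw [bures_euc_inner_eq_dot]
    exact hdot i j
  set v : Fin N → EuclideanSpace ℝ (Fin N) :=
    fun i => (Real.sqrt (lam i))⁻¹ • (WithLp.toLp 2 (B *ᵥ ⇑(w i))) with hv
  have hvon : Orthonormal ℝ (Set.restrict {i | lam i ≠ 0} v) := by
    rw [orthonormal_iff_ite]
    rintro ⟨i, hi⟩ ⟨j, hj⟩
    simp only [Set.restrict_apply, hv]
    dsimp only [Set.restrict, Set.domRestrict]
    rw [real_inner_smul_left, real_inner_smul_right, hBw i j]
    by_cases hij : i = j
    · subst hij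
      have hpos : 0 < lam i := lt_of_le_of_ne (hlam0 i) (Ne.symm hi)
      have hs : Real.sqrt (lam i) ≠ 0 := by positivity
      rw [if_pos rfl, if_pos rfl, ← Real.mul_self_sqrt (hlam0 i)]
      field_simp
      rw [Real.sqrt_sq (Real.sqrt_nonneg _)]
    · have hne : (⟨i, hi⟩ : {i | lam i ≠ 0}) ≠ ⟨j, hj⟩ := by simpa using hij
      rw [if_neg hij, if_neg hne]
      ring
  obtain ⟨b, hb⟩ := hvon.exists_orthonormalBasis_extension_of_card_eq (by simp)
  have key : ∀ i, (WithLp.toLp 2 (B *ᵥ ⇑(w i)))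
      = Real.sqrt (lam i) • b i := by
    intro i
    by_cases hi : lam i = 0
    · have hz : (B *ᵥ ⇑(w i)) ⬝ᵥ (B *ᵥ ⇑(w i)) = 0 := by rw [hdot i i, if_pos rfl, hi]
      have : B *ᵥ ⇑(w i) = 0 := dotProduct_self_eq_zero.mp hz
      rw [hi, Real.sqrt_zero, zero_smul]
      simp [this]
    · have hbi : b i = v i := hb i hi
      have hpos : 0 < lam i := lt_of_le_of_ne (hlam0 i) (Ne.symm hi)
      have hs : Real.sqrt (lam i) ≠ 0 := by positivity
      rw [hbi]
      show _ = Real.sqrt (lam i) • ((Real.sqrt (lam i))⁻¹ •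
        (WithLp.toLp 2 (B *ᵥ ⇑(w i))))
      rw [smul_smul, mul_inv_cancel₀ hs, one_smul]
  set W : Matrix (Fin N) (Fin N) ℝ := (h.eigenvectorUnitary : Matrix (Fin N) (Fin N) ℝ) with hWdef
  have hWapp : ∀ j i, W j i = w i j := fun j i => h.eigenvectorUnitary_apply j i
  have hWW : W * Wᵀ = 1 := by
    have := (h.eigenvectorUnitary).2
    rwa [Matrix.mem_unitaryGroup_iff] at this
  have hWW' : Wᵀ * W = 1 := by
    have := (h.eigenvectorUnitary).2
    rwa [Matrix.mem_unitaryGroup_iff'] at this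
  set U : Matrix (Fin N) (Fin N) ℝ := Matrix.of (fun j i => b i j) with hUdef
  have hUU : Uᵀ * U = 1 := by
    ext i j
    rw [Matrix.mul_apply]
    show ⇑(b i) ⬝ᵥ ⇑(b j) = (1 : Matrix (Fin N) (Fin N) ℝ) i j
    rw [← bures_euc_inner_eq_dot, orthonormal_iff_ite.mp b.orthonormal i j, Matrix.one_apply]
  have hsqrt : hS.sqrt = W * Matrix.diagonal (Real.sqrt ∘ lam) * Wᵀ := rfl
  have hBW : B * W = U * Matrix.diagonal (Real.sqrt ∘ lam) := by
    ext j i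
    rw [Matrix.mul_apply, Matrix.mul_diagonal]
    calc ∑ k, B j k * W k i = (B *ᵥ ⇑(w i)) j := by simp only [hWapp]; rfl
      _ = Real.sqrt (lam i) * b i j := by
          have := congrArg (fun v : EuclideanSpace ℝ (Fin N) => v j) (key i); simpa using this
      _ = U j i * (Real.sqrt ∘ lam) i := by rw [mul_comm]; rfl
  refine ⟨U * Wᵀ, ?_, ?_⟩
  · have e1 : (U * Wᵀ)ᵀ * (U * Wᵀ) = W * (Uᵀ * U) * Wᵀ := by
      rw [Matrix.transpose_mul, Matrix.transpose_transpose, Matrix.mul_assoc, Matrix.mul_assoc,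
        Matrix.mul_assoc]
    rw [e1, hUU, Matrix.mul_one, hWW]
  · show B = U * Wᵀ * hS.sqrt
    rw [hsqrt]
    have e2 : U * Wᵀ * (W * Matrix.diagonal (Real.sqrt ∘ lam) * Wᵀ)
        = U * (Wᵀ * W) * Matrix.diagonal (Real.sqrt ∘ lam) * Wᵀ := by
      simp only [Matrix.mul_assoc]
    rw [e2, hWW', Matrix.mul_one, ← hBW, Matrix.mul_assoc, hWW, Matrix.mul_one]

private lemma bures_dot_le_of_norm_eq {N : ℕ} (x y : Fin N → ℝ) (hyy : y ⬝ᵥ y = x ⬝ᵥ x) :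
    x ⬝ᵥ y ≤ x ⬝ᵥ x := by
  have hxx : 0 ≤ x ⬝ᵥ x := Finset.sum_nonneg fun i _ => mul_self_nonneg _
  have hcs : (x ⬝ᵥ y) ^ 2 ≤ (x ⬝ᵥ x) * (y ⬝ᵥ y) := by
    have := Finset.sum_mul_sq_le_sq_mul_sq Finset.univ x y
    simpa [dotProduct, pow_two, Finset.mul_sum, mul_comm, mul_left_comm] using this
  rw [hyy] at hcs
  calc x ⬝ᵥ y ≤ |x ⬝ᵥ y| := le_abs_self _
    _ = Real.sqrt ((x ⬝ᵥ y) ^ 2) := (Real.sqrt_sq_eq_abs _).symm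
    _ ≤ Real.sqrt ((x ⬝ᵥ x) * (x ⬝ᵥ x)) := Real.sqrt_le_sqrt hcs
    _ = x ⬝ᵥ x := Real.sqrt_mul_self hxx

private lemma bures_trace_mul_orth_le {N : ℕ} {P R : Matrix (Fin N) (Fin N) ℝ}
    (hP : P.PosSemidef) (hR : Rᵀ * R = 1) : (P * R).trace ≤ P.trace := by
  set C := hP.sqrt with hC
  have hCC : C * C = P := bures_sqrt_mul_self hP
  have hCsym : Cᵀ = C := hP.posSemidef_sqrt.1
  have hRv : ∀ x : Fin N → ℝ, (R *ᵥ x) ⬝ᵥ (R *ᵥ x) = x ⬝ᵥ x := by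
    intro x
    have : x ⬝ᵥ ((Rᵀ * R) *ᵥ x) = (R *ᵥ x) ⬝ᵥ (R *ᵥ x) := by
      rw [← Matrix.mulVec_mulVec, Matrix.dotProduct_mulVec, Matrix.vecMul_transpose]
    rw [← this, hR, Matrix.one_mulVec]
  have htr : (P * R).trace = (C * (R * C)).trace := by
    rw [← hCC, Matrix.mul_assoc, Matrix.trace_mul_comm C (C * R), Matrix.mul_assoc]
  rw [htr, ← hCC, Matrix.trace, Matrix.trace]
  apply Finset.sum_le_sum
  intro i _
  have hdiag1 : (C * (R * C)).diag i = (fun k => C i k) ⬝ᵥ (R *ᵥ (fun k => C i k)) := by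
    simp only [Matrix.diag, Matrix.mul_apply, dotProduct, Matrix.mulVec, dotProduct]
    congr 1
    funext k
    congr 1
    congr 1
    funext l
    rw [show C l i = C i l from by conv_lhs => rw [← hCsym, Matrix.transpose_apply]]
  have hdiag2 : (C * C).diag i = (fun k => C i k) ⬝ᵥ (fun k => C i k) := by
    simp only [Matrix.diag, Matrix.mul_apply, dotProduct]
    congr 1
    funext k
    rw [show C k i = C i k from by conv_lhs => rw [← hCsym, Matrix.transpose_apply]]
  rw [hdiag1, hdiag2]
  exact bures_dot_le_of_norm_eq _ _ (hRv _)

private lemma bures_fidelity_eq {M N : ℕ} (X Y : Matrix (Fin M) (Fin N) ℝ) :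
    fidelity (psd_gram X) (psd_gram Y) = (psd_tmul (Xᵀ * Y)).sqrt.trace := by
  set C := (psd_gram X).sqrt with hCdef
  have hCsym : Cᵀ = C := (psd_gram X).posSemidef_sqrt.1
  have hCC : C * C = X * Xᵀ := bures_sqrt_mul_self (psd_gram X)
  have e1 : C * (Y * Yᵀ) * C = (Yᵀ * C)ᵀ * (Yᵀ * C) := by
    rw [Matrix.transpose_mul, Matrix.transpose_transpose, hCsym]
    simp only [Matrix.mul_assoc]
  have e2 : (Yᵀ * C) * (Yᵀ * C)ᵀ = (Xᵀ * Y)ᵀ * (Xᵀ * Y) := by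
    rw [Matrix.transpose_mul, Matrix.transpose_transpose, hCsym, Matrix.transpose_mul,
      Matrix.transpose_transpose]
    calc Yᵀ * C * (C * Y) = Yᵀ * (C * C) * Y := by simp only [Matrix.mul_assoc]
      _ = Yᵀ * (X * Xᵀ) * Y := by rw [hCC]
      _ = Yᵀ * X * (Xᵀ * Y) := by simp only [Matrix.mul_assoc]
  calc fidelity (psd_gram X) (psd_gram Y)
      = (psd_tmul (Yᵀ * C)).sqrt.trace :=
        bures_sqrt_trace_congr e1 (psd_sand (psd_gram X) (psd_gram Y)) (psd_tmul (Yᵀ * C))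
    _ = (psd_gram (Yᵀ * C)).sqrt.trace := bures_trace_sqrt_symm (Yᵀ * C)
    _ = (psd_tmul (Xᵀ * Y)).sqrt.trace :=
        bures_sqrt_trace_congr e2 (psd_gram (Yᵀ * C)) (psd_tmul (Xᵀ * Y))

private lemma bures_frob_expand {M N : ℕ} (X Y : Matrix (Fin M) (Fin N) ℝ)
    (Q : Matrix (Fin N) (Fin N) ℝ) (hQ : Qᵀ * Q = 1) :
    (frobNorm (X - Y * Q)) ^ 2 = Matrix.trace (X * Xᵀ) + Matrix.trace (Y * Yᵀ)
      - 2 * Matrix.trace ((Xᵀ * Y) * Q) := by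
  have hnn : 0 ≤ Matrix.trace ((X - Y * Q)ᵀ * (X - Y * Q)) := by
    rw [Matrix.trace]
    refine Finset.sum_nonneg fun i _ => ?_
    simp only [Matrix.diag, Matrix.mul_apply, Matrix.transpose_apply]
    exact Finset.sum_nonneg fun j _ => mul_self_nonneg _
  have hfq : (frobNorm (X - Y * Q)) ^ 2 = Matrix.trace ((X - Y * Q)ᵀ * (X - Y * Q)) := by
    rw [frobNorm, Real.sq_sqrt hnn]
  rw [hfq]
  have hQQ : Q * Qᵀ = 1 := mul_eq_one_comm.mp hQ
  have h1 : Matrix.trace ((Y * Q)ᵀ * (Y * Q)) = Matrix.trace (Y * Yᵀ) := by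
    rw [Matrix.transpose_mul]
    calc Matrix.trace (Qᵀ * Yᵀ * (Y * Q)) = Matrix.trace (Qᵀ * (Yᵀ * Y * Q)) := by
          simp only [Matrix.mul_assoc]
      _ = Matrix.trace (Yᵀ * Y * Q * Qᵀ) := Matrix.trace_mul_comm _ _
      _ = Matrix.trace (Yᵀ * Y * (Q * Qᵀ)) := by simp only [Matrix.mul_assoc]
      _ = Matrix.trace (Yᵀ * Y) := by rw [hQQ, Matrix.mul_one]
      _ = Matrix.trace (Y * Yᵀ) := Matrix.trace_mul_comm _ _
  have h2 : Matrix.trace ((Y * Q)ᵀ * X) = Matrix.trace ((Xᵀ * Y) * Q) := by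
    calc Matrix.trace ((Y * Q)ᵀ * X) = Matrix.trace (((Y * Q)ᵀ * X)ᵀ) :=
          (Matrix.trace_transpose _).symm
      _ = Matrix.trace (Xᵀ * (Y * Q)) := by rw [Matrix.transpose_mul, Matrix.transpose_transpose]
      _ = Matrix.trace ((Xᵀ * Y) * Q) := by rw [Matrix.mul_assoc]
  have h3 : Matrix.trace (Xᵀ * (Y * Q)) = Matrix.trace ((Xᵀ * Y) * Q) := by
    rw [Matrix.mul_assoc]
  have h4 : Matrix.trace (Xᵀ * X) = Matrix.trace (X * Xᵀ) := Matrix.trace_mul_comm _ _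
  rw [Matrix.transpose_sub, Matrix.sub_mul, Matrix.mul_sub, Matrix.mul_sub,
    Matrix.trace_sub, Matrix.trace_sub, Matrix.trace_sub, h1, h2, h3, h4]
  ring

end BuresHelpers

theorem bures_sq_eq_procrustes_sq (M N : ℕ) (X Y : Matrix (Fin M) (Fin N) ℝ) :
    IsLeast {t : ℝ | ∃ Q : Matrix (Fin N) (Fin N) ℝ, Qᵀ * Q = 1 ∧ t = (frobNorm (X - Y * Q)) ^ 2}
      (Matrix.trace (X * Xᵀ) + Matrix.trace (Y * Yᵀ) - 2 * fidelity (psd_gram X) (psd_gram Y)) := by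
  have hfid := bures_fidelity_eq X Y
  set P := (psd_tmul (Xᵀ * Y)).sqrt with hPdef
  have hPpsd : P.PosSemidef := (psd_tmul (Xᵀ * Y)).posSemidef_sqrt
  obtain ⟨Q₀, hQ₀, hpol⟩ := bures_exists_polar (Xᵀ * Y)
  have hQ₀' : Q₀ * Q₀ᵀ = 1 := mul_eq_one_comm.mp hQ₀
  constructor
  · refine ⟨Q₀ᵀ, ?_, ?_⟩
    · rw [Matrix.transpose_transpose]
      exact hQ₀'
    · rw [bures_frob_expand X Y Q₀ᵀ (by rw [Matrix.transpose_transpose]; exact hQ₀'), hfid]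
      have : Matrix.trace ((Xᵀ * Y) * Q₀ᵀ) = P.trace := by
        rw [hpol]
        calc Matrix.trace (Q₀ * P * Q₀ᵀ) = Matrix.trace (Q₀ * (P * Q₀ᵀ)) := by
              rw [Matrix.mul_assoc]
          _ = Matrix.trace (P * Q₀ᵀ * Q₀) := Matrix.trace_mul_comm _ _
          _ = Matrix.trace (P * (Q₀ᵀ * Q₀)) := by rw [Matrix.mul_assoc]
          _ = P.trace := by rw [hQ₀, Matrix.mul_one]
      rw [this]
  · rintro t ⟨Q, hQ, rfl⟩
    rw [bures_frob_expand X Y Q hQ, hfid]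
    have hle : Matrix.trace ((Xᵀ * Y) * Q) ≤ P.trace := by
      have horth : (Q * Q₀)ᵀ * (Q * Q₀) = 1 := by
        rw [Matrix.transpose_mul]
        calc Q₀ᵀ * Qᵀ * (Q * Q₀) = Q₀ᵀ * (Qᵀ * Q) * Q₀ := by simp only [Matrix.mul_assoc]
          _ = 1 := by rw [hQ, Matrix.mul_one, hQ₀]
      have : Matrix.trace ((Xᵀ * Y) * Q) = Matrix.trace (P * (Q * Q₀)) := by
        rw [hpol]
        calc Matrix.trace (Q₀ * P * Q) = Matrix.trace (Q₀ * (P * Q)) := by rw [Matrix.mul_assoc]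
          _ = Matrix.trace (P * Q * Q₀) := Matrix.trace_mul_comm _ _
          _ = Matrix.trace (P * (Q * Q₀)) := by rw [Matrix.mul_assoc]
      rw [this]
      exact bures_trace_mul_orth_le hPpsd horth
    linarith
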